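/- arXiv:1305.3959 — 2 statements merged into one kernel-verified Lean document; each statement's English description precedes it below -/
import Mathlib

section
/- Let EE(ξ) = B·log₂(1+γξ)/(v₁ + v₂√ξ) with B, γ, v₁, v₂ > 0. Then on the interval [ζ, ∞), where ζ = (v+√(1+v²))²/γ² with v = v₂/v₁, the function EE is quasi-concave: it has at most one interior stationary point, and if ξ₁ < ξ₂ < ξ₃ are in [ζ,∞) then EE(ξ₂) ≥ min(EE(ξ₁), EE(ξ₃)). -/
open Real Set

/-- Derivative of the sign function ψ at a point s*s with s > 0. -/
lemma psi_deriv (γ v₁ v₂ : ℝ) (hγ : 0 < γ) (hv₁ : 0 < v₁) (hv₂ : 0 < v₂)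
    (s : ℝ) (hs : 0 < s) :
    HasDerivAt (fun ξ : ℝ => 2*γ*Real.sqrt ξ*(v₁+v₂*Real.sqrt ξ)/(v₂*(1+γ*ξ)) - Real.log (1+γ*ξ))
      (γ*(v₁+v₂*s)*(1-γ*(s*s))/(v₂*s*(1+γ*(s*s))^2)) (s*s) := by
  have hp : (0:ℝ) < s*s := by positivity
  have hss : Real.sqrt (s*s) = s := Real.sqrt_mul_self hs.le
  have h1p : (0:ℝ) < 1 + γ*(s*s) := by positivity
  have hsq : HasDerivAt Real.sqrt (1/(2*s)) (s*s) := by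
    have := Real.hasDerivAt_sqrt (x := s*s) (by positivity)
    rwa [hss] at this
  have hlin : HasDerivAt (fun ξ : ℝ => 1 + γ*ξ) γ (s*s) := by
    simpa using ((hasDerivAt_id (s*s)).const_mul γ).const_add 1
  have hf : HasDerivAt (fun ξ : ℝ => 2*γ*Real.sqrt ξ*(v₁+v₂*Real.sqrt ξ))
      ((2*γ*(1/(2*s)))*(v₁+v₂*Real.sqrt (s*s)) + (2*γ*Real.sqrt (s*s))*(v₂*(1/(2*s)))) (s*s) :=
    (hsq.const_mul (2*γ)).mul ((hsq.const_mul v₂).const_add v₁)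
  have hg : HasDerivAt (fun ξ : ℝ => v₂*(1+γ*ξ)) (v₂*γ) (s*s) := hlin.const_mul v₂
  have hlog : HasDerivAt (fun ξ : ℝ => Real.log (1+γ*ξ)) (γ/(1+γ*(s*s))) (s*s) := hlin.log h1p.ne'
  have hg0 : v₂*(1+γ*(s*s)) ≠ 0 := by positivity
  have := (hf.div hg hg0).sub hlog
  refine this.congr_deriv ?_
  rw [hss]
  field_simp
  ring

/-- `EE(ξ) = B·log₂(1+γξ)/(v₁ + v₂√ξ)` is quasi-concave on `[ζ, ∞)`, where
`ζ = (v+√(1+v²))²/γ²`, `v = v₂/v₁`: it has at most one interior stationary point, and for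
`ξ₁ < ξ₂ < ξ₃` in `[ζ,∞)` one has `EE(ξ₂) ≥ min(EE(ξ₁), EE(ξ₃))`. -/
theorem stmt8 (B γ v₁ v₂ : ℝ) (hB : 0 < B) (hγ : 0 < γ) (hv₁ : 0 < v₁) (hv₂ : 0 < v₂)
    (EE : ℝ → ℝ)
    (hEE : ∀ ξ : ℝ, EE ξ = B * Real.logb 2 (1 + γ * ξ) / (v₁ + v₂ * Real.sqrt ξ))
    (ζ : ℝ) (hζ : ζ = (v₂ / v₁ + Real.sqrt (1 + (v₂ / v₁) ^ 2)) ^ 2 / γ ^ 2) :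
    (∀ a ∈ Set.Ioi ζ, ∀ b ∈ Set.Ioi ζ,
        HasDerivAt EE 0 a → HasDerivAt EE 0 b → a = b) ∧
    (∀ ξ₁ ∈ Set.Ici ζ, ∀ ξ₂ ∈ Set.Ici ζ, ∀ ξ₃ ∈ Set.Ici ζ,
        ξ₁ < ξ₂ → ξ₂ < ξ₃ → min (EE ξ₁) (EE ξ₃) ≤ EE ξ₂) := by
  have hζpos : 0 < ζ := by
    rw [hζ]
    have h1 : 0 < v₂ / v₁ + Real.sqrt (1 + (v₂ / v₁) ^ 2) := by positivity
    positivity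
  have hlog2 : (0:ℝ) < Real.log 2 := Real.log_pos (by norm_num)
  set ψ : ℝ → ℝ := fun ξ => 2*γ*Real.sqrt ξ*(v₁+v₂*Real.sqrt ξ)/(v₂*(1+γ*ξ)) - Real.log (1+γ*ξ)
    with hψdef
  set c : ℝ → ℝ := fun ξ => B*v₂/(Real.log 2*(2*Real.sqrt ξ)*(v₁+v₂*Real.sqrt ξ)^2) with hcdef
  have hcpos : ∀ x, 0 < x → 0 < c x := by
    intro x hx
    have hsx : 0 < Real.sqrt x := Real.sqrt_pos.mpr hx
    rw [hcdef]
    positivity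
  -- derivative of ψ
  have hψd : ∀ x, 0 < x →
      HasDerivAt ψ (γ*(v₁+v₂*Real.sqrt x)*(1-γ*x)/(v₂*Real.sqrt x*(1+γ*x)^2)) x := by
    intro x hx
    have hx' : Real.sqrt x * Real.sqrt x = x := Real.mul_self_sqrt hx.le
    have h := psi_deriv γ v₁ v₂ hγ hv₁ hv₂ (Real.sqrt x) (Real.sqrt_pos.mpr hx)
    rw [hx'] at h
    exact h
  -- derivative of EE
  have hfun : EE = fun ξ => B * Real.logb 2 (1 + γ * ξ) / (v₁ + v₂ * Real.sqrt ξ) := funext hEE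
  have hEEd : ∀ x, 0 < x → HasDerivAt EE (c x * ψ x) x := by
    intro x hx
    have hsx : 0 < Real.sqrt x := Real.sqrt_pos.mpr hx
    have h1x : (0:ℝ) < 1 + γ*x := by positivity
    have hDx : (0:ℝ) < v₁ + v₂*Real.sqrt x := by positivity
    have hlin : HasDerivAt (fun ξ : ℝ => 1 + γ*ξ) γ x := by
      simpa using ((hasDerivAt_id x).const_mul γ).const_add 1
    have hN : HasDerivAt (fun ξ : ℝ => B * Real.logb 2 (1 + γ * ξ))
        (B * (γ/(1+γ*x)) / Real.log 2) x := by
      have h := ((hlin.log h1x.ne').div_const (Real.log 2)).const_mul B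
      have : (fun ξ : ℝ => B * Real.logb 2 (1 + γ * ξ))
          = fun ξ : ℝ => B * (Real.log (1 + γ * ξ) / Real.log 2) := by
        funext ξ; rw [Real.logb]
      rw [this]
      refine h.congr_deriv ?_
      ring
    have hD : HasDerivAt (fun ξ : ℝ => v₁ + v₂*Real.sqrt ξ) (v₂*(1/(2*Real.sqrt x))) x :=
      ((Real.hasDerivAt_sqrt hx.ne').const_mul v₂).const_add v₁
    have h := hN.div hD hDx.ne'
    rw [hfun]
    refine h.congr_deriv ?_
    rw [hψdef, hcdef, Real.logb]
    field_simp
  -- ψ is positive on (0, 1/γ]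
  have hψcont : ContinuousOn ψ (Icc 0 (1/γ)) := by
    apply ContinuousOn.sub
    · apply ContinuousOn.div
      · fun_prop
      · fun_prop
      · intro x hx
        have hx0 : 0 ≤ x := hx.1
        positivity
    · apply ContinuousOn.log
      · fun_prop
      · intro x hx
        have hx0 : 0 ≤ x := hx.1
        positivity
  have hψ0 : ψ 0 = 0 := by
    rw [hψdef]; simp
  have hψmono : StrictMonoOn ψ (Icc 0 (1/γ)) := by
    apply strictMonoOn_of_deriv_pos (convex_Icc _ _) hψcont
    intro x hx
    rw [interior_Icc] at hx
    obtain ⟨hx0, hx1⟩ := hx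
    have hsx : 0 < Real.sqrt x := Real.sqrt_pos.mpr hx0
    have h1 : 0 < 1 - γ*x := by
      have : γ * x < 1 := by
        rw [lt_div_iff₀ hγ] at hx1; nlinarith
      linarith
    rw [(hψd x hx0).deriv]
    have h1x : (0:ℝ) < 1 + γ*x := by positivity
    exact div_pos (mul_pos (mul_pos hγ (by positivity)) h1) (by positivity)
  have hψpos : ∀ x, 0 < x → x ≤ 1/γ → 0 < ψ x := by
    intro x hx hle
    have := hψmono (left_mem_Icc.mpr (by positivity)) ⟨hx.le, hle⟩ hx
    rwa [hψ0] at this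
  -- ψ is strictly decreasing on [1/γ, ∞)
  have hψanti : StrictAntiOn ψ (Ici (1/γ)) := by
    apply strictAntiOn_of_deriv_neg (convex_Ici _)
    · intro x hx
      have hx0 : 0 < x := lt_of_lt_of_le (by positivity) hx
      exact ((hψd x hx0).continuousAt).continuousWithinAt
    · intro x hx
      rw [interior_Ici] at hx
      have hx0 : 0 < x := lt_trans (by positivity) hx
      have hsx : 0 < Real.sqrt x := Real.sqrt_pos.mpr hx0
      have h1 : 1 - γ*x < 0 := by
        have hx' : 1/γ < x := hx
        rw [div_lt_iff₀ hγ] at hx'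
        nlinarith
      rw [(hψd x hx0).deriv]
      have h1x : (0:ℝ) < 1 + γ*x := by positivity
      exact div_neg_of_neg_of_pos
        (mul_neg_of_pos_of_neg (mul_pos hγ (by positivity)) h1) (by positivity)
  constructor
  · -- uniqueness of stationary points
    intro a ha b hb hda hdb
    have hψzero : ∀ x, ζ < x → HasDerivAt EE 0 x → ψ x = 0 := by
      intro x hx hd
      have hx0 : 0 < x := lt_trans hζpos hx
      have := hd.unique (hEEd x hx0)
      have hc := (hcpos x hx0).ne'
      field_simp at this
      exact (mul_eq_zero.mp this.symm).resolve_left hc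
    have hψa := hψzero a ha hda
    have hψb := hψzero b hb hdb
    have ha0 : 0 < a := lt_trans hζpos ha
    have hb0 : 0 < b := lt_trans hζpos hb
    have hage : 1/γ ≤ a := by
      by_contra h
      push_neg at h
      exact absurd hψa (hψpos a ha0 h.le).ne'
    have hbge : 1/γ ≤ b := by
      by_contra h
      push_neg at h
      exact absurd hψb (hψpos b hb0 h.le).ne'
    exact hψanti.injOn hage hbge (hψa.trans hψb.symm)
  · -- quasi-concavity
    intro ξ₁ h₁ ξ₂ h₂ ξ₃ h₃ h12 h23
    have h₁0 : 0 < ξ₁ := lt_of_lt_of_le hζpos h₁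
    have h₂0 : 0 < ξ₂ := lt_of_lt_of_le hζpos h₂
    have h₃0 : 0 < ξ₃ := lt_of_lt_of_le hζpos h₃
    rcases le_or_gt 0 (ψ ξ₂) with hcase | hcase
    · -- EE increasing on [ξ₁, ξ₂]
      have hmono : StrictMonoOn EE (Icc ξ₁ ξ₂) := by
        apply strictMonoOn_of_deriv_pos (convex_Icc _ _)
        · intro x hx
          have hx0 : 0 < x := lt_of_lt_of_le h₁0 hx.1
          exact ((hEEd x hx0).continuousAt).continuousWithinAt
        · intro x hx
          rw [interior_Icc] at hx
          have hx0 : 0 < x := lt_trans h₁0 hx.1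
          rw [(hEEd x hx0).deriv]
          have hψx : 0 < ψ x := by
            rcases le_or_gt x (1/γ) with hle | hgt
            · exact hψpos x hx0 hle
            · have := hψanti hgt.le (le_trans hgt.le hx.2.le) hx.2
              linarith [hcase]
          exact mul_pos (hcpos x hx0) hψx
      have := hmono (left_mem_Icc.mpr h12.le) (right_mem_Icc.mpr h12.le) h12
      exact le_trans (min_le_left _ _) this.le
    · -- ψ ξ₂ < 0: EE decreasing on [ξ₂, ξ₃]
      have h2g : 1/γ < ξ₂ := by
        by_contra h
        push_neg at h
        exact absurd hcase (not_lt.mpr (hψpos ξ₂ h₂0 h).le)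
      have hanti : StrictAntiOn EE (Icc ξ₂ ξ₃) := by
        apply strictAntiOn_of_deriv_neg (convex_Icc _ _)
        · intro x hx
          have hx0 : 0 < x := lt_of_lt_of_le h₂0 hx.1
          exact ((hEEd x hx0).continuousAt).continuousWithinAt
        · intro x hx
          rw [interior_Icc] at hx
          have hx0 : 0 < x := lt_trans h₂0 hx.1
          rw [(hEEd x hx0).deriv]
          have hψx : ψ x < 0 := by
            have := hψanti h2g.le (le_trans h2g.le hx.1.le) hx.1
            linarith [hcase]
          exact mul_neg_of_pos_of_neg (hcpos x hx0) hψx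
      have := hanti (left_mem_Icc.mpr h23.le) (right_mem_Icc.mpr h23.le) h23
      exact le_trans (min_le_right _ _) this.le
end

section
/- For ξ > 0, the equation (2/ln 2)·(1/ξ)·(v₁√ξ + v₂ξ) = v₂·log₂(γξ) (the high-SNR stationarity condition) has the solution ξ = (1/γ)·exp(2 + 2W(√γ/(e·v))), where v = v₂/v₁ and W is the principal branch of the Lambert W function. Moreover since √γ/(ev) > 0, this W value is unique and positive. -/
open Real

/-- If `w > 0` satisfies the Lambert W relation `w·e^w = √γ/(e·v)` with
`v = v₂/v₁`, then `ξ = (1/γ)·exp(2 + 2w)` solves the high-SNR stationarity condition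
`(2/ln 2)·(1/ξ)·(v₁√ξ + v₂ξ) = v₂·log₂(γξ)`; moreover such a `w` is unique. -/
theorem stmt10 (v₁ v₂ γ : ℝ) (hv₁ : 0 < v₁) (hv₂ : 0 < v₂) (hγ : 0 < γ)
    (w : ℝ) (hw : 0 < w)
    (hW : w * Real.exp w = Real.sqrt γ / (Real.exp 1 * (v₂ / v₁))) :
    ((2 / Real.log 2) * (1 / ((1 / γ) * Real.exp (2 + 2 * w))) *
        (v₁ * Real.sqrt ((1 / γ) * Real.exp (2 + 2 * w))
          + v₂ * ((1 / γ) * Real.exp (2 + 2 * w)))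
      = v₂ * Real.logb 2 (γ * ((1 / γ) * Real.exp (2 + 2 * w)))) ∧
    (∀ w' : ℝ, 0 < w' →
      w' * Real.exp w' = Real.sqrt γ / (Real.exp 1 * (v₂ / v₁)) → w' = w) := by
  have hsγ : 0 < Real.sqrt γ := Real.sqrt_pos.mpr hγ
  have hE : 0 < Real.exp (1 + w) := Real.exp_pos _
  have hlog2 : Real.log 2 ≠ 0 := ne_of_gt (Real.log_pos one_lt_two)
  -- key relation: v₁ * √γ = w * v₂ * exp(1+w)
  have hkey : v₁ * Real.sqrt γ = w * v₂ * Real.exp (1 + w) := by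
    have he : Real.exp (1 + w) = Real.exp 1 * Real.exp w := Real.exp_add 1 w
    field_simp at hW
    rw [he]
    nlinarith [hW, Real.exp_pos 1, Real.exp_pos w]
  have hξ : (1 / γ) * Real.exp (2 + 2 * w) = (Real.exp (1 + w) / Real.sqrt γ) ^ 2 := by
    rw [div_pow, ← Real.exp_nat_mul, Real.sq_sqrt hγ.le]
    norm_num
    ring_nf
  constructor
  · have hsq : Real.sqrt ((1 / γ) * Real.exp (2 + 2 * w))
        = Real.exp (1 + w) / Real.sqrt γ := by
      rw [hξ, Real.sqrt_sq (by positivity)]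
    have hγξ : γ * ((1 / γ) * Real.exp (2 + 2 * w)) = Real.exp (2 + 2 * w) := by
      field_simp
    have hlogb : Real.logb 2 (Real.exp (2 + 2 * w)) = (2 + 2 * w) / Real.log 2 := by
      rw [Real.logb, Real.log_exp]
    rw [hsq, hγξ, hlogb, hξ]
    have h2 : Real.sqrt γ ^ 2 = γ := Real.sq_sqrt hγ.le
    field_simp
    linear_combination hkey
  · intro w' hw' hW'
    have h : w' * Real.exp w' = w * Real.exp w := by rw [hW, hW']
    rcases lt_trichotomy w' w with hlt | heq | hgt
    · exfalso
      have := mul_lt_mul'' hlt (Real.exp_lt_exp.mpr hlt) hw'.le (Real.exp_pos w').le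
      linarith
    · exact heq
    · exfalso
      have := mul_lt_mul'' hgt (Real.exp_lt_exp.mpr hgt) hw.le (Real.exp_pos w).le
      linarith
end
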